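/- Let n ≥ 2 and let (X,T) be a topologically ergodic system containing n pairwise distinct minimal subsets M₁,…,Mₙ. Then (X,T) is broken F_ps-n-sensitive. -/
import Mathlib


open Filter Topology MeasureTheory

variable {X : Type} [MetricSpace X]

def orbit (T : X → X) (x : X) : Set X := Set.range fun n : ℕ => T^[n] x

def IsTransitiveSys (T : X → X) : Prop :=
  ∀ U V : Set X, IsOpen U → U.Nonempty → IsOpen V → V.Nonempty →
    {n : ℕ | (U ∩ T^[n] ⁻¹' V).Nonempty}.Infinite

def MinimalPoint (T : X → X) (x : X) : Prop :=
  ∀ y ∈ closure (orbit T x), x ∈ closure (orbit T y)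

def MinimalSys (T : X → X) : Prop := ∀ x : X, Dense (orbit T x)

def IsMinimalSubset (T : X → X) (M : Set X) : Prop :=
  M.Nonempty ∧ IsClosed M ∧ Set.MapsTo T M M ∧
    ∀ M' ⊆ M, M'.Nonempty → IsClosed M' → Set.MapsTo T M' M' → M' = M

noncomputable def ubd (F : Set ℕ) : ℝ :=
  Filter.limsup (fun N : ℕ => ⨆ m : ℕ, ((F ∩ Set.Ico m (m + N)).ncard : ℝ) / N) atTop

noncomputable def lbd (F : Set ℕ) : ℝ :=
  Filter.liminf (fun N : ℕ => ⨅ m : ℕ, ((F ∩ Set.Ico m (m + N)).ncard : ℝ) / N) atTop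

def Syndetic (F : Set ℕ) : Prop := ∃ N : ℕ, ∀ k : ℕ, ∃ j ∈ F, k ≤ j ∧ j ≤ k + N

def Thick (F : Set ℕ) : Prop := ∀ l : ℕ, ∃ m : ℕ, Set.Icc m (m + l) ⊆ F

def PiecewiseSyndetic (F : Set ℕ) : Prop := ∃ A B : Set ℕ, Thick A ∧ Syndetic B ∧ F = A ∩ B

def Fps : Set (Set ℕ) := {F | PiecewiseSyndetic F}
def Fpubd : Set (Set ℕ) := {F | 0 < ubd F}
def Finf : Set (Set ℕ) := {F | F.Infinite}

def FursFamily (S : Set (Set ℕ)) : Prop := ∀ F₁ F₂ : Set ℕ, F₁ ⊆ F₂ → F₁ ∈ S → F₂ ∈ S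

def FamRecurrent {Z : Type} [MetricSpace Z] (S : Set (Set ℕ)) (T : Z → Z) (x : Z) : Prop :=
  ∀ U : Set Z, IsOpen U → x ∈ U → {n : ℕ | T^[n] x ∈ U} ∈ S

def BrokenSensitive (T : X → X) (S : Set (Set ℕ)) (n : ℕ) : Prop :=
  ∃ δ > (0:ℝ), ∃ F₀ ∈ S, ∀ U : Set X, IsOpen U → U.Nonempty → ∀ l : ℕ,
    ∃ x : Fin n → X, (∀ i, x i ∈ U) ∧ ∃ m : ℕ,
      ∀ k ∈ F₀ ∩ Set.Icc 1 l, ∀ i j : Fin n, i ≠ j →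
        δ < dist (T^[m + k] (x i)) (T^[m + k] (x j))

def SensitiveTuple (T : X → X) {n : ℕ} (x : Fin n → X) : Prop :=
  ∀ U : Set X, IsOpen U → U.Nonempty →
    ∀ V : Fin n → Set X, (∀ i, IsOpen (V i) ∧ x i ∈ V i) →
      ∃ y : Fin n → X, (∀ i, y i ∈ U) ∧ ∃ m : ℕ, ∀ i, T^[m] (y i) ∈ V i

def EssentialSensitiveTuple (T : X → X) {n : ℕ} (x : Fin n → X) : Prop :=
  Function.Injective x ∧ SensitiveTuple T x

def prodMap (T : X → X) (n : ℕ) : (Fin n → X) → Fin n → X := fun x i => T (x i)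

def BlockilyThickly (T : X → X) (n : ℕ) : Prop :=
  ∃ δ > (0:ℝ), ∀ k : ℕ, ∀ U : Set X, IsOpen U → U.Nonempty →
    ∃ x : Fin n → X, (∀ i, x i ∈ U) ∧ ∃ m : ℕ, ∀ l ≤ k, ∀ i j : Fin n, i ≠ j →
      δ < dist (T^[m + l] (x i)) (T^[m + l] (x j))

def WeaklyMixing (T : X → X) : Prop :=
  IsTransitiveSys (fun p : X × X => (T p.1, T p.2))

def TopologicallyErgodic (T : X → X) : Prop :=
  ∀ U V : Set X, IsOpen U → U.Nonempty → IsOpen V → V.Nonempty →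
    Syndetic {m : ℕ | (T^[m] ⁻¹' U ∩ V).Nonempty}

def MeanEquicontinuous (T : X → X) : Prop :=
  ∀ ε > (0:ℝ), ∃ δ > (0:ℝ), ∀ x y : X, dist x y < δ →
    Filter.limsup (fun m : ℕ => (∑ k ∈ Finset.range m, dist (T^[k] x) (T^[k] y)) / m) atTop < ε

def BanachProximal (T : X → X) (x y : X) : Prop :=
  ∀ ε > (0:ℝ), ubd {m : ℕ | ε ≤ dist (T^[m] x) (T^[m] y)} = 0

def EquicontinuousSys (T : X → X) : Prop :=
  ∀ ε > (0:ℝ), ∃ δ > (0:ℝ), ∀ x y : X, dist x y < δ → ∀ n : ℕ, dist (T^[n] x) (T^[n] y) < ε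

noncomputable def measSupp {Z : Type} [MetricSpace Z] [MeasurableSpace Z] (T : Z → Z) : Set Z :=
  closure (⋃ μ ∈ {μ : Measure Z | IsProbabilityMeasure μ ∧
      ∀ s : Set Z, MeasurableSet s → μ (T ⁻¹' s) = μ s},
    {x : Z | ∀ U : Set Z, IsOpen U → x ∈ U → 0 < μ U})
lemma univ_mem_Fps : (Set.univ : Set ℕ) ∈ Fps := by
  refine ⟨Set.univ, Set.univ, ?_, ?_, by simp⟩
  · intro l; exact ⟨0, fun x _ => trivial⟩
  · exact ⟨0, fun k => ⟨k, trivial, le_refl k, by omega⟩⟩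

lemma syndetic_mono {F F' : Set ℕ} (h : F ⊆ F') (hF : Syndetic F) : Syndetic F' := by
  obtain ⟨N, hN⟩ := hF
  exact ⟨N, fun k => by obtain ⟨j, hj, h1, h2⟩ := hN k; exact ⟨j, h hj, h1, h2⟩⟩

lemma common_syndetic {n : ℕ} (S : Fin n → ℕ → Set ℕ)
    (hsynd : ∀ i L, Syndetic (S i L))
    (hmono : ∀ (i : Fin n) (L L' m t : ℕ), m ∈ S i L' → L + t ≤ L' → m + t ∈ S i L) :
    ∀ (r L : ℕ), ∃ m, ∀ i : Fin n, (i : ℕ) < r → m ∈ S i L := by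
  intro r
  induction r with
  | zero => intro L; exact ⟨0, fun i hi => absurd hi (by omega)⟩
  | succ r ih =>
    intro L
    by_cases h : r < n
    · obtain ⟨N, hN⟩ := hsynd ⟨r, h⟩ L
      obtain ⟨m', hm'⟩ := ih (L + N)
      obtain ⟨j, hjS, hj1, hj2⟩ := hN m'
      refine ⟨j, fun i hi => ?_⟩
      rcases lt_or_eq_of_le (Nat.lt_succ_iff.mp hi) with hlt | heq
      · have := hmono i L (L + N) m' (j - m') (hm' i hlt) (by omega)
        rwa [Nat.add_sub_cancel' hj1] at this
      · have : i = ⟨r, h⟩ := Fin.ext heq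
        rwa [this]
    · obtain ⟨m, hm⟩ := ih L
      exact ⟨m, fun i hi => hm i (by omega)⟩

theorem stmt9 [CompactSpace X] (T : X → X) (hT : Continuous T) (hTs : Function.Surjective T)
    (n : ℕ) (hn : 2 ≤ n) (herg : TopologicallyErgodic T)
    (M : Fin n → Set X) (hM : ∀ i, IsMinimalSubset T (M i)) (hinj : Function.Injective M) :
    BrokenSensitive T Fps n := by
  classical
  -- the minimal sets are pairwise disjoint
  have hdisj : ∀ i j : Fin n, i ≠ j → ∀ p ∈ M i, p ∉ M j := by
    intro i j hij p hpi hpj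
    have hsub : M i ∩ M j ⊆ M i := Set.inter_subset_left
    have hne : (M i ∩ M j).Nonempty := ⟨p, hpi, hpj⟩
    have hcl : IsClosed (M i ∩ M j) := (hM i).2.1.inter (hM j).2.1
    have hmap : Set.MapsTo T (M i ∩ M j) (M i ∩ M j) :=
      fun x hx => ⟨(hM i).2.2.1 hx.1, (hM j).2.2.1 hx.2⟩
    have h1 : M i ∩ M j = M i := (hM i).2.2.2 _ Set.inter_subset_left hne hcl hmap
    have h2 : M i ∩ M j = M j := (hM j).2.2.2 _ Set.inter_subset_right hne hcl hmap
    exact hij (hinj (h1 ▸ h2))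
  -- positive separation between any two distinct minimal sets
  have hpair : ∀ i j : Fin n, i ≠ j → ∃ c > (0:ℝ), ∀ p ∈ M i, ∀ q ∈ M j, c ≤ dist p q := by
    intro i j hij
    have hci : IsCompact (M i) := (hM i).2.1.isCompact
    have hcj : IsCompact (M j) := (hM j).2.1.isCompact
    have hne : ((M i) ×ˢ (M j)).Nonempty := (hM i).1.prod (hM j).1
    obtain ⟨⟨p₀, q₀⟩, hmem, hmin⟩ :=
      (hci.prod hcj).exists_isMinOn hne
        ((continuous_dist.comp (continuous_fst.prodMk continuous_snd)).continuousOn)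
    refine ⟨dist p₀ q₀, ?_, fun p hp q hq => by simpa using hmin (Set.mk_mem_prod hp hq)⟩
    have : p₀ ≠ q₀ := fun h => hdisj i j hij p₀ hmem.1 (h ▸ hmem.2)
    exact dist_pos.mpr this
  -- a uniform positive separation δ₀
  obtain ⟨δ₀, hδ₀pos, hδ₀⟩ :
      ∃ δ₀ > (0:ℝ), ∀ i j : Fin n, i ≠ j → ∀ p ∈ M i, ∀ q ∈ M j, δ₀ ≤ dist p q := by
    have hn0 : 0 < n := by omega
    set c : Fin n × Fin n → ℝ := fun p =>
      if h : p.1 ≠ p.2 then (hpair p.1 p.2 h).choose else 1 with hc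
    have hcpos : ∀ p : Fin n × Fin n, 0 < c p := by
      intro p
      simp only [hc]
      split
      · next h => exact (hpair p.1 p.2 h).choose_spec.1
      · exact one_pos
    have hne : (Finset.univ : Finset (Fin n × Fin n)).Nonempty := by
      exact ⟨(⟨0, hn0⟩, ⟨0, hn0⟩), Finset.mem_univ _⟩
    refine ⟨Finset.univ.inf' hne c, ?_, ?_⟩
    · exact (Finset.lt_inf'_iff hne).mpr fun p _ => hcpos p
    · intro i j hij p hp q hq
      have h1 : Finset.univ.inf' hne c ≤ c (i, j) := Finset.inf'_le _ (Finset.mem_univ _)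
      have h2 : c (i, j) ≤ dist p q := by
        simp only [hc, dif_pos hij]
        exact (hpair i j hij).choose_spec.2 p hp q hq
      linarith
  -- the δ/4-neighborhoods of the minimal sets
  set W : Fin n → Set X := fun i => ⋃ q ∈ M i, Metric.ball q (δ₀ / 4) with hW
  have hWopen : ∀ i, IsOpen (W i) := fun i =>
    isOpen_biUnion fun q _ => Metric.isOpen_ball
  have hWsub : ∀ i, M i ⊆ W i := by
    intro i q hq
    exact Set.mem_biUnion hq (by simp [Metric.mem_ball]; linarith)
  have hWsep : ∀ i j : Fin n, i ≠ j → ∀ y ∈ W i, ∀ z ∈ W j, δ₀ / 4 < dist y z := by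
    intro i j hij y hy z hz
    obtain ⟨p, hp, hyp⟩ := Set.mem_iUnion₂.mp hy
    obtain ⟨q, hq, hzq⟩ := Set.mem_iUnion₂.mp hz
    rw [Metric.mem_ball] at hyp hzq
    have h1 : δ₀ ≤ dist p q := hδ₀ i j hij p hp q hq
    have h2 : dist p q ≤ dist p y + dist y z + dist z q := dist_triangle4 p y z q
    rw [dist_comm p y] at h2
    linarith
  refine ⟨δ₀ / 4, by linarith, Set.univ, univ_mem_Fps, ?_⟩
  intro U hUopen hUne l
  -- the syndetic family of good times
  set S : Fin n → ℕ → Set ℕ := fun i L =>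
    {m | ∃ x ∈ U, ∀ k ≤ L, T^[m + k] x ∈ W i} with hS
  have hsynd : ∀ i L, Syndetic (S i L) := by
    intro i L
    set V : Set X := ⋂ k ∈ Finset.range (L + 1), T^[k] ⁻¹' (W i) with hV
    have hVopen : IsOpen V :=
      isOpen_biInter_finset fun k _ => (hWopen i).preimage (hT.iterate k)
    have hVne : V.Nonempty := by
      obtain ⟨q, hq⟩ := (hM i).1
      refine ⟨q, Set.mem_biInter fun k _ => ?_⟩
      exact hWsub i (((hM i).2.2.1.iterate k) hq)
    have := herg V U hVopen hVne hUopen hUne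
    refine syndetic_mono ?_ this
    rintro m ⟨x, hxV, hxU⟩
    refine ⟨x, hxU, fun k hk => ?_⟩
    have hmem : T^[m] x ∈ T^[k] ⁻¹' (W i) := by
      have := Set.mem_iInter₂.mp hxV k (Finset.mem_range.mpr (by omega))
      exact this
    have : T^[k] (T^[m] x) ∈ W i := hmem
    rwa [← Function.iterate_add_apply, Nat.add_comm k m] at this
  have hmono : ∀ (i : Fin n) (L L' m t : ℕ), m ∈ S i L' → L + t ≤ L' → m + t ∈ S i L := by
    rintro i L L' m t ⟨x, hxU, hx⟩ hle
    refine ⟨x, hxU, fun k hk => ?_⟩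
    have := hx (t + k) (by omega)
    rwa [← Nat.add_assoc] at this
  obtain ⟨m, hm⟩ := common_syndetic S hsynd hmono n l
  have hall : ∀ i : Fin n, ∃ x ∈ U, ∀ k ≤ l, T^[m + k] x ∈ W i :=
    fun i => hm i i.isLt
  choose x hxU hxW using hall
  refine ⟨x, hxU, m, ?_⟩
  rintro k ⟨-, hk1, hk2⟩ i j hij
  exact hWsep i j hij _ (hxW i k hk2) _ (hxW j k hk2)
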